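/- arXiv:1312.2992 — 3 statements merged into one kernel-verified Lean document; each statement's English description precedes it below -/
import Mathlib

section
/- Let n ≥ 1, k ≥ 1, let R be an n×n complex matrix with Rᵏ = 1 (the identity matrix), and let ζ ∈ ℂ be a primitive k-th root of unity. Then there exists a map Ψ : ℂ → M(n,ℂ) such that: Ψ is analytic at every point of ℂ ∖ {0}; Ψ(z) is invertible for every z ≠ 0; every entry of Ψ is meromorphic at 0; and Ψ(ζ⁻¹·z) = Ψ(z)·R for every z ≠ 0. -/
open Matrix

/-- For `R` with `Rᵏ = 1` and `ζ` a primitive `k`-th root of unity, there is a map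
`Ψ : ℂ → M(n,ℂ)`, analytic and invertible away from `0`, with entries meromorphic at `0`,
satisfying `Ψ(ζ⁻¹·z) = Ψ(z)·R` for `z ≠ 0`. -/
theorem stmt11 (n k : ℕ) (hn : 1 ≤ n) (hk : 1 ≤ k)
    (R : Matrix (Fin n) (Fin n) ℂ) (hR : R ^ k = 1)
    (ζ : ℂ) (hζ : IsPrimitiveRoot ζ k) :
    ∃ Ψ : ℂ → Matrix (Fin n) (Fin n) ℂ,
      (∀ z : ℂ, z ≠ 0 → ∀ i j : Fin n, AnalyticAt ℂ (fun w => Ψ w i j) z) ∧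
      (∀ z : ℂ, z ≠ 0 → IsUnit (Ψ z)) ∧
      (∀ i j : Fin n, MeromorphicAt (fun w => Ψ w i j) 0) ∧
      (∀ z : ℂ, z ≠ 0 → Ψ (ζ⁻¹ * z) = Ψ z * R) := by
  classical
  have hk0 : k ≠ 0 := by omega
  have hζk : ζ ^ k = 1 := hζ.pow_eq_one
  have hζ0 : ζ ≠ 0 := hζ.ne_zero hk0
  have hkC : (k : ℂ) ≠ 0 := Nat.cast_ne_zero.mpr hk0
  set P : ℕ → Matrix (Fin n) (Fin n) ℂ :=
    fun t => (k : ℂ)⁻¹ • ∑ m ∈ Finset.range k, (ζ ^ t) ^ m • R ^ m with hPdef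
  -- geometric sum lemma
  have geo : ∀ ω : ℂ, ω ^ k = 1 → ω ≠ 1 → ∑ m ∈ Finset.range k, ω ^ m = 0 := by
    intro ω h1 h2
    rw [geom_sum_eq h2, h1]
    simp
  -- Lemma A : P t * R = (ζ^t)⁻¹ • P t
  have hA : ∀ t, P t * R = (ζ ^ t)⁻¹ • P t := by
    intro t
    have hz : (ζ ^ t) ^ k = 1 := by rw [← pow_mul, mul_comm, pow_mul, hζk, one_pow]
    have hzt0 : ζ ^ t ≠ 0 := pow_ne_zero _ hζ0
    have key : ∑ m ∈ Finset.range k, (ζ ^ t) ^ (m + 1) • R ^ (m + 1)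
        = ∑ m ∈ Finset.range k, (ζ ^ t) ^ m • R ^ m := by
      have h1 := Finset.sum_range_succ (fun m => (ζ ^ t) ^ m • R ^ m) k
      have h2 := Finset.sum_range_succ' (fun m => (ζ ^ t) ^ m • R ^ m) k
      simp only [hz, hR, pow_zero, one_smul] at h1 h2
      exact add_right_cancel (h2.symm.trans h1)
    calc P t * R = (k : ℂ)⁻¹ • ∑ m ∈ Finset.range k, (ζ ^ t) ^ m • (R ^ m * R) := by
          rw [hPdef]
          simp [Matrix.smul_mul, Finset.sum_mul, Matrix.smul_mul]
      _ = (k : ℂ)⁻¹ • ∑ m ∈ Finset.range k, (ζ ^ t)⁻¹ • ((ζ ^ t) ^ (m + 1) • R ^ (m + 1)) := by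
          congr 1
          refine Finset.sum_congr rfl fun m _ => ?_
          rw [smul_smul, ← pow_succ]
          congr 1
          field_simp [pow_succ]
          ring
      _ = (ζ ^ t)⁻¹ • P t := by
          rw [← Finset.smul_sum, key, hPdef]
          simp [smul_smul, mul_comm]
  -- Lemma A' : P t * R^m = ((ζ^t)⁻¹)^m • P t
  have hA' : ∀ t m, P t * R ^ m = ((ζ ^ t)⁻¹) ^ m • P t := by
    intro t m
    induction m with
    | zero => simp
    | succ m ih =>
      rw [pow_succ, ← Matrix.mul_assoc, ih, Matrix.smul_mul, hA, smul_smul, pow_succ]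
  -- orthogonality
  have hB : ∀ t ∈ Finset.range k, ∀ s ∈ Finset.range k,
      P t * P s = if t = s then P t else 0 := by
    intro t ht s hs
    have hzt0 : ζ ^ t ≠ 0 := pow_ne_zero _ hζ0
    have step : P t * P s = ((k : ℂ)⁻¹ * ∑ m ∈ Finset.range k, (ζ ^ s * (ζ ^ t)⁻¹) ^ m) • P t := by
      have expand : P s = (k : ℂ)⁻¹ • ∑ m ∈ Finset.range k, (ζ ^ s) ^ m • R ^ m := rfl
      calc P t * P s = (k : ℂ)⁻¹ • ∑ m ∈ Finset.range k, (ζ ^ s) ^ m • (P t * R ^ m) := by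
            rw [expand]
            simp [Matrix.mul_smul, Finset.mul_sum]
        _ = (k : ℂ)⁻¹ • ∑ m ∈ Finset.range k, ((ζ ^ s * (ζ ^ t)⁻¹) ^ m) • P t := by
            congr 1
            refine Finset.sum_congr rfl fun m _ => ?_
            rw [hA' t m, smul_smul, mul_pow]
        _ = ((k : ℂ)⁻¹ * ∑ m ∈ Finset.range k, (ζ ^ s * (ζ ^ t)⁻¹) ^ m) • P t := by
            rw [← Finset.sum_smul, smul_smul]
    by_cases hts : t = s
    · subst hts
      rw [step, mul_inv_cancel₀ hzt0]
      simp [hkC]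
    · have hω1 : ζ ^ s * (ζ ^ t)⁻¹ ≠ 1 := by
        intro h
        apply hts
        have : ζ ^ t = ζ ^ s := by
          field_simp at h
          exact h.symm
        exact hζ.pow_inj (Finset.mem_range.mp ht) (Finset.mem_range.mp hs) this
      have hωk : (ζ ^ s * (ζ ^ t)⁻¹) ^ k = 1 := by
        rw [mul_pow, inv_pow, ← pow_mul, ← pow_mul, mul_comm s k, mul_comm t k,
          pow_mul, pow_mul, hζk, one_pow, one_pow]
        simp
      rw [step, geo _ hωk hω1]
      simp [hts]
  -- sum of projections is 1
  have hC : ∑ t ∈ Finset.range k, P t = 1 := by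
    rw [hPdef]
    rw [← Finset.smul_sum, Finset.sum_comm]
    have : ∀ m ∈ Finset.range k,
        (∑ t ∈ Finset.range k, (ζ ^ t) ^ m • R ^ m)
          = (if m = 0 then (k : ℂ) else 0) • R ^ m := by
      intro m hm
      rw [← Finset.sum_smul]
      congr 1
      by_cases hm0 : m = 0
      · simp [hm0]
      · rw [if_neg hm0]
        have hne1 : ζ ^ m ≠ 1 :=
          hζ.pow_ne_one_of_pos_of_lt hm0 (Finset.mem_range.mp hm)
        have hone : (ζ ^ m) ^ k = 1 := by
          rw [← pow_mul, mul_comm, pow_mul, hζk, one_pow]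
        have := geo _ hone hne1
        rw [← this]
        refine Finset.sum_congr rfl fun t _ => ?_
        rw [← pow_mul, ← pow_mul, mul_comm]
    rw [Finset.sum_congr rfl this]
    simp only [ite_smul, zero_smul, Finset.sum_ite_eq', Finset.mem_range]
    rw [if_pos (Nat.pos_of_ne_zero hk0)]
    simp [smul_smul, inv_mul_cancel₀ hkC]
  -- the map
  set Ψ : ℂ → Matrix (Fin n) (Fin n) ℂ :=
    fun z => ∑ t ∈ Finset.range k, z ^ t • P t with hΨdef
  -- multiplicativity
  have hD : ∀ z w : ℂ, Ψ z * Ψ w = Ψ (z * w) := by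
    intro z w
    calc Ψ z * Ψ w = ∑ t ∈ Finset.range k, ∑ s ∈ Finset.range k,
          (z ^ t * w ^ s) • (P t * P s) := by
          rw [hΨdef]
          rw [Finset.sum_mul_sum]
          refine Finset.sum_congr rfl fun t _ => Finset.sum_congr rfl fun s _ => ?_
          rw [Matrix.smul_mul, Matrix.mul_smul, smul_smul]
      _ = ∑ t ∈ Finset.range k, (z * w) ^ t • P t := by
          refine Finset.sum_congr rfl fun t ht => ?_
          rw [Finset.sum_congr rfl (fun s hs => by rw [hB t ht s hs])]
          simp only [smul_ite, smul_zero, Finset.sum_ite_eq]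
          rw [if_pos ht, mul_pow]
      _ = Ψ (z * w) := rfl
  have hone : Ψ 1 = 1 := by
    rw [hΨdef]
    simp only [one_pow, one_smul]
    exact hC
  have hentry : ∀ (w : ℂ) i j, Ψ w i j = ∑ t ∈ Finset.range k, w ^ t * P t i j := by
    intro w i j
    rw [hΨdef]
    simp [Matrix.sum_apply]
  refine ⟨Ψ, ?_, ?_, ?_, ?_⟩
  · intro z _ i j
    have : (fun w => Ψ w i j) = fun w => ∑ t ∈ Finset.range k, w ^ t * P t i j := by
      funext w; exact hentry w i j
    rw [this]
    exact Finset.analyticAt_fun_sum _ fun t _ =>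
      (analyticAt_id.fun_pow t).fun_mul analyticAt_const
  · intro z hz
    refine ⟨⟨Ψ z, Ψ z⁻¹, ?_, ?_⟩, rfl⟩
    · rw [hD, mul_inv_cancel₀ hz, hone]
    · rw [hD, inv_mul_cancel₀ hz, hone]
  · intro i j
    have : (fun w => Ψ w i j) = fun w => ∑ t ∈ Finset.range k, w ^ t * P t i j := by
      funext w; exact hentry w i j
    rw [this]
    exact (Finset.analyticAt_fun_sum _ fun t _ =>
      (analyticAt_id.fun_pow t).fun_mul analyticAt_const).meromorphicAt
  · intro z _
    rw [hΨdef]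
    simp only
    rw [Finset.sum_mul]
    refine Finset.sum_congr rfl fun t _ => ?_
    rw [Matrix.smul_mul, hA, mul_pow, inv_pow, mul_smul, smul_comm]
end

section
/- The matrix exponential is surjective onto GL(n,ℂ): for every n ≥ 1 and every invertible n×n complex matrix R, there exists an n×n complex matrix B with exp(B) = R. In particular, for every R ∈ GL(n,ℂ) there exists B with exp(2πi B) = R. -/
set_option maxHeartbeats 1600000

open Polynomial Finset NormedSpace

noncomputable def Lpoly (k : ℕ) : Polynomial ℂ :=
  ∑ i ∈ Finset.range (k - 1), C ((-1 : ℂ) ^ i / (i + 1)) * X ^ (i + 1)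

noncomputable def Epoly (k : ℕ) : Polynomial ℂ :=
  ∑ j ∈ Finset.range k, C ((j.factorial : ℂ)⁻¹) * (Lpoly k) ^ j

lemma deriv_Lpoly (k : ℕ) :
    derivative (Lpoly k) = ∑ i ∈ Finset.range (k - 1), (-X : Polynomial ℂ) ^ i := by
  rw [Lpoly, map_sum]
  refine Finset.sum_congr rfl fun i _ => ?_
  rw [derivative_C_mul_X_pow]
  have h : ((-1 : ℂ) ^ i / ((i : ℂ) + 1) * ((i : ℂ) + 1)) = (-1) ^ i :=
    div_mul_cancel₀ _ (Nat.cast_add_one_ne_zero i)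
  simp only [Nat.add_sub_cancel, Nat.cast_add, Nat.cast_one, h]
  rw [neg_pow]; simp; ring

lemma deriv_Epoly (k : ℕ) :
    derivative (Epoly k) =
      (∑ j ∈ Finset.range (k - 1), C ((j.factorial : ℂ)⁻¹) * (Lpoly k) ^ j)
        * derivative (Lpoly k) := by
  rcases Nat.eq_zero_or_pos k with rfl | hk
  · simp [Epoly]
  obtain ⟨m, rfl⟩ : ∃ m, k = m + 1 := ⟨k - 1, by omega⟩
  rw [Epoly, map_sum, Finset.sum_mul, Finset.sum_range_succ']
  simp only [Nat.add_sub_cancel]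
  have h0 : derivative (C ((Nat.factorial 0 : ℂ)⁻¹) * Lpoly (m + 1) ^ 0) = 0 := by simp
  rw [h0, add_zero]
  refine Finset.sum_congr rfl fun i _ => ?_
  rw [derivative_C_mul, derivative_pow]
  have h : (C (((i+1).factorial : ℂ))⁻¹ * C (((i:ℂ) + 1))) = C ((i.factorial : ℂ))⁻¹ := by
    rw [← C_mul]
    congr 1
    rw [Nat.factorial_succ]
    push_cast
    rw [mul_inv]
    field_simp
  simp only [Nat.add_sub_cancel, Nat.cast_add, Nat.cast_one]
  rw [← mul_assoc, ← mul_assoc, h]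

lemma X_dvd_Lpoly (k : ℕ) : (X : Polynomial ℂ) ∣ Lpoly k :=
  Finset.dvd_sum fun j _ => Dvd.dvd.mul_left (dvd_pow_self X (by omega)) _


lemma one_add_X_mul_deriv_Lpoly (k : ℕ) :
    (1 + X) * derivative (Lpoly k) = 1 - (-X : Polynomial ℂ) ^ (k - 1) := by
  rw [deriv_Lpoly]
  have := geom_sum_mul (-X : Polynomial ℂ) (k - 1)
  linear_combination -this

lemma coeff_rec (k : ℕ) (H : Polynomial ℂ) (h0 : H.coeff 0 = 0)
    (hd : (X : Polynomial ℂ) ^ (k - 1) ∣ (1 + X) * derivative H - H) :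
    (X : Polynomial ℂ) ^ k ∣ H := by
  rw [X_pow_dvd_iff] at hd ⊢
  intro d hdk
  induction d with
  | zero => exact h0
  | succ d ih =>
    have hcoeffd : H.coeff d = 0 := ih (by omega)
    have hx : ((1 + X) * derivative H - H).coeff d = 0 := hd d (by omega)
    have h1 : ((1 + X) * derivative H).coeff d
        = (derivative H).coeff d + (X * derivative H).coeff d := by
      rw [add_mul, one_mul, coeff_add]
    have h2 : (X * derivative H).coeff d = 0 := by
      rcases d with _ | e
      · simp [coeff_mul, Finset.Nat.antidiagonal_zero]
      · rw [coeff_X_mul, coeff_derivative, ih (by omega), zero_mul]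
    rw [coeff_sub, h1, h2, add_zero, hcoeffd, sub_zero, coeff_derivative] at hx
    exact (mul_eq_zero.mp hx).resolve_right (Nat.cast_add_one_ne_zero d)

lemma formal_key {k : ℕ} (hk : 1 ≤ k) :
    (X : Polynomial ℂ) ^ k ∣ Epoly k - (1 + X) := by
  obtain ⟨m, rfl⟩ : ∃ m, k = m + 1 := ⟨k - 1, by omega⟩
  apply coeff_rec
  · rw [coeff_sub, coeff_zero_eq_eval_zero, coeff_add]
    have hL : (Lpoly (m + 1)).eval 0 = 0 := by
      have := X_dvd_Lpoly (m + 1)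
      obtain ⟨q, hq⟩ := this
      simp [hq]
    rw [Epoly, eval_finset_sum]
    rw [Finset.sum_eq_single 0]
    · simp
    · intro j _ hj
      simp [hL, zero_pow hj]
    · simp
  · simp only [Nat.add_sub_cancel]
    set S : Polynomial ℂ :=
      ∑ j ∈ Finset.range m, C ((j.factorial : ℂ)⁻¹) * (Lpoly (m + 1)) ^ j with hS
    have hE : Epoly (m + 1) = S + C ((m.factorial : ℂ)⁻¹) * (Lpoly (m + 1)) ^ m := by
      rw [Epoly, Finset.sum_range_succ]
    have hder : derivative (Epoly (m+1)) = S * derivative (Lpoly (m+1)) := by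
      rw [deriv_Epoly]; simp only [Nat.add_sub_cancel, hS]
    have key : (1 + X) * derivative (Epoly (m+1) - (1+X)) - (Epoly (m+1) - (1+X))
        = - (S * (-X) ^ m) - C ((m.factorial : ℂ)⁻¹) * (Lpoly (m + 1)) ^ m := by
      rw [derivative_sub, hder]
      have hd1 : derivative ((1 : Polynomial ℂ) + X) = 1 := by simp
      rw [hd1, hE]
      have gL : (1 + X) * derivative (Lpoly (m+1)) = 1 - (-X : Polynomial ℂ) ^ m := by
        have := one_add_X_mul_deriv_Lpoly (m+1); simpa using this
      linear_combination S * gL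
    have d1 : (X : Polynomial ℂ) ^ m ∣ S * (-X) ^ m :=
      Dvd.dvd.mul_left (by rw [neg_pow]; exact Dvd.dvd.mul_left dvd_rfl _) _
    have d2 : (X : Polynomial ℂ) ^ m ∣ C ((m.factorial : ℂ)⁻¹) * (Lpoly (m + 1)) ^ m :=
      Dvd.dvd.mul_left (pow_dvd_pow_of_dvd (X_dvd_Lpoly _) m) _
    rw [key]
    exact dvd_sub (dvd_neg.mpr d1) d2

section BA
variable {A : Type*} [NormedRing A] [NormedAlgebra ℂ A] [CompleteSpace A]

lemma idem_pow {e : A} (he : e * e = e) : ∀ j : ℕ, e ^ (j + 1) = e := by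
  intro j
  induction j with
  | zero => simp
  | succ j ih => rw [pow_succ, ih, he]

lemma exp_of_nilpotent {N : A} {k : ℕ} (hN : N ^ k = 0) :
    exp N = ∑ j ∈ Finset.range k, ((j.factorial : ℂ))⁻¹ • N ^ j := by
  rw [exp_eq_tsum ℂ]
  exact tsum_eq_sum fun b hb => by
    rw [pow_eq_zero_of_le (by simpa using hb) hN, smul_zero]

lemma exp_smul_idem (c : ℂ) {e : A} (he : e * e = e) :
    exp (c • e) = 1 + (Complex.exp c - 1) • e := by
  have hsum : Summable fun n : ℕ => ((n.factorial : ℂ))⁻¹ • (c • e) ^ n :=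
    expSeries_summable' (𝕂 := ℂ) (c • e)
  have hsc : Summable fun n : ℕ => ((n.factorial : ℂ))⁻¹ * c ^ n := by
    simpa [smul_eq_mul] using expSeries_summable' (𝕂 := ℂ) c
  have hsc' : Summable fun n : ℕ => (((n+1).factorial : ℂ))⁻¹ * c ^ (n+1) :=
    (summable_nat_add_iff 1).mpr hsc
  have hstart : exp (c • e) = ∑' n : ℕ, ((n.factorial : ℂ))⁻¹ • (c • e) ^ n := by
    rw [exp_eq_tsum ℂ]
  rw [hstart, Summable.tsum_eq_zero_add hsum]
  have h0 : ((Nat.factorial 0 : ℂ))⁻¹ • (c • e) ^ 0 = 1 := by simp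
  have hterm : ∀ n : ℕ, ((Nat.factorial (n+1) : ℂ))⁻¹ • (c • e) ^ (n+1)
      = ((((n+1).factorial : ℂ))⁻¹ * c ^ (n+1)) • e := by
    intro n
    rw [_root_.smul_pow, idem_pow he, smul_smul]
  simp only [h0, hterm]
  rw [Summable.tsum_smul_const hsc']
  congr 1
  congr 1
  have hexp : Complex.exp c = ∑' n : ℕ, ((n.factorial : ℂ))⁻¹ * c ^ n := by
    rw [Complex.exp_eq_exp_ℂ, exp_eq_tsum ℂ]
    simp [smul_eq_mul]
  rw [hexp, Summable.tsum_eq_zero_add hsc]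
  simp

lemma single_root_block (R e : A) (he : e * e = e) (hRe : Commute R e)
    {l : ℂ} (hl : l ≠ 0) {k : ℕ} (hk : 1 ≤ k)
    (hann : ((R - algebraMap ℂ A l) ^ k) * e = 0) :
    ∃ p : Polynomial ℂ, exp ((Polynomial.aeval R p) * e) = 1 - e + R * e := by
  set q : Polynomial ℂ := Polynomial.C l⁻¹ * (X - Polynomial.C l) with hq
  have haq : Polynomial.aeval R q = l⁻¹ • (R - algebraMap ℂ A l) := by
    simp [hq, Algebra.smul_def, sub_mul, mul_sub, Polynomial.aeval_C]
  have hqe : Commute (Polynomial.aeval R q) e := by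
    rw [haq]
    exact ((hRe.sub_left (Algebra.commutes l e)).smul_left _)
  set u : A := (Polynomial.aeval R q) * e with hu
  have hue : Commute e u := hqe.symm.mul_right (Commute.refl e)
  have hupow : ∀ j : ℕ, u ^ (j + 1) = (Polynomial.aeval R q) ^ (j + 1) * e := by
    intro j
    rw [hu, hqe.mul_pow, idem_pow he]
  have huk : u ^ k = 0 := by
    obtain ⟨m, rfl⟩ : ∃ m, k = m + 1 := ⟨k - 1, by omega⟩
    rw [hupow, haq, _root_.smul_pow]
    rw [smul_mul_assoc, hann, smul_zero]
  -- N := aeval u (Lpoly k)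
  set N : A := Polynomial.aeval u (Lpoly k) with hN
  have hNsum : N = ∑ i ∈ Finset.range (k-1), ((-1 : ℂ) ^ i / (i + 1)) • u ^ (i + 1) := by
    rw [hN, Lpoly, map_sum]
    exact Finset.sum_congr rfl fun i _ => by
      rw [map_mul, Polynomial.aeval_C, map_pow, Polynomial.aeval_X, Algebra.smul_def]
  -- N as aeval R pN * e
  set pN : Polynomial ℂ := ∑ i ∈ Finset.range (k-1), C ((-1 : ℂ) ^ i / (i + 1)) * q ^ (i + 1)
    with hpN
  have hNRe : N = (Polynomial.aeval R pN) * e := by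
    rw [hNsum, hpN, map_sum, Finset.sum_mul]
    exact Finset.sum_congr rfl fun i _ => by
      rw [map_mul, Polynomial.aeval_C, map_pow, hupow, Algebra.smul_def, mul_assoc]
  -- N nilpotent
  set m' : A := ∑ i ∈ Finset.range (k-1), ((-1 : ℂ) ^ i / (i + 1)) • u ^ i with hm'
  have hNum : N = u * m' := by
    rw [hNsum, hm', Finset.mul_sum]
    exact Finset.sum_congr rfl fun i _ => by
      rw [mul_smul_comm, pow_succ']
  have hum' : Commute u m' := by
    refine Commute.sum_right _ _ _ fun i _ => ((Commute.pow_right (Commute.refl u) i).smul_right _)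
  have hNk : N ^ k = 0 := by
    rw [hNum, hum'.mul_pow, huk, zero_mul]
  -- exp N = 1 + u
  have hexpN : exp N = 1 + u := by
    rw [exp_of_nilpotent hNk]
    have h1 : ∑ j ∈ Finset.range k, ((j.factorial : ℂ))⁻¹ • N ^ j
        = Polynomial.aeval u (Epoly k) := by
      rw [Epoly, map_sum]
      exact Finset.sum_congr rfl fun j _ => by
        rw [map_mul, Polynomial.aeval_C, map_pow, hN, Algebra.smul_def]
    rw [h1]
    obtain ⟨W, hW⟩ := formal_key hk
    have h2 : Epoly k = (1 + X) + X ^ k * W := by rw [← hW]; ring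
    rw [h2, map_add, map_add, map_mul, map_pow, Polynomial.aeval_X, huk, zero_mul, add_zero,
      map_one]
  -- commute for exp_add
  have heN : Commute ((Complex.log l) • e) N := by
    have h3 : Commute e N := by
      rw [hNsum]
      exact Commute.sum_right _ _ _ fun i _ => ((hue.pow_right (i+1)).smul_right _)
    exact h3.smul_left _
  refine ⟨Polynomial.C (Complex.log l) + pN, ?_⟩
  have hB : (Polynomial.aeval R (Polynomial.C (Complex.log l) + pN)) * e
      = (Complex.log l) • e + N := by
    rw [map_add, add_mul, Polynomial.aeval_C, hNRe, Algebra.smul_def]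
  let +nondep : NormedAlgebra ℚ A := .restrictScalars ℚ ℂ A
  rw [hB, exp_add_of_commute heN, exp_smul_idem _ he, Complex.exp_log hl, hexpN]
  have heu : e * u = u := by
    rw [hu, ← mul_assoc, ← hqe.eq, mul_assoc, he]
  have hlu : l • u = R * e - l • e := by
    rw [hu, haq, smul_mul_assoc, smul_smul, mul_inv_cancel₀ hl, one_smul, sub_mul,
      Algebra.smul_def]
  have hRe2 : R * e = l • u + l • e := by rw [hlu]; abel
  rw [mul_add, mul_one, add_mul, one_mul, smul_mul_assoc, heu, hRe2]
  module

lemma key_induction (s : ℕ) :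
    ∀ χ : Polynomial ℂ, χ.roots.toFinset.card ≤ s → χ ≠ 0 → χ.eval 0 ≠ 0 →
    ∀ R e : A, Commute R e → e * e = e → (Polynomial.aeval R χ) * e = 0 →
    ∃ p : Polynomial ℂ, exp ((Polynomial.aeval R p) * e) = 1 - e + R * e := by
  induction s with
  | zero =>
    intro χ hcard hχ h0 R e hRe he hann
    -- χ is a nonzero constant, so e = 0
    have hroots : χ.roots = 0 := Multiset.toFinset_eq_empty.mp (Finset.card_eq_zero.mp
      (Nat.le_zero.mp hcard))
    have hdeg : χ.natDegree = 0 := by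
      by_contra hne
      obtain ⟨z, hz⟩ := Complex.exists_root (natDegree_pos_iff_degree_pos.mp (Nat.pos_of_ne_zero hne))
      have : z ∈ χ.roots := (mem_roots hχ).mpr hz
      rw [hroots] at this
      simpa using this
    have hC : χ = C (χ.coeff 0) := eq_C_of_natDegree_eq_zero hdeg
    have hc0 : χ.coeff 0 ≠ 0 := by rwa [coeff_zero_eq_eval_zero]
    have he0 : e = 0 := by
      have : (Polynomial.aeval R χ) * e = (χ.coeff 0) • e := by
        conv_lhs => rw [hC]
        rw [Polynomial.aeval_C, Algebra.smul_def]
      rw [this] at hann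
      exact (smul_eq_zero.mp hann).resolve_left hc0
    exact ⟨0, by simp [he0]⟩
  | succ s IH =>
    intro χ hcard hχ h0 R e hRe he hann
    by_cases hc : χ.roots.toFinset.card ≤ s
    · exact IH χ hc hχ h0 R e hRe he hann
    -- there is a root l
    have hpos : 0 < χ.roots.toFinset.card := by omega
    obtain ⟨l, hl⟩ := Finset.card_pos.mp hpos
    have hlr : l ∈ χ.roots := Multiset.mem_toFinset.mp hl
    set k := rootMultiplicity l χ with hk
    have hk1 : 1 ≤ k := (rootMultiplicity_pos hχ).mpr ((mem_roots hχ).mp hlr)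
    set χ₁ : Polynomial ℂ := (X - C l) ^ k with hχ₁
    set χ₂ : Polynomial ℂ := χ /ₘ (X - C l) ^ k with hχ₂
    have hfac : χ₁ * χ₂ = χ := pow_mul_divByMonic_rootMultiplicity_eq χ l
    have hevall : χ₂.eval l ≠ 0 := eval_divByMonic_pow_rootMultiplicity_ne_zero l hχ
    have hχ₂0 : χ₂ ≠ 0 := fun h => by rw [h, mul_zero] at hfac; exact hχ hfac.symm
    have h20 : χ₂.eval 0 ≠ 0 := by
      intro h
      apply h0
      rw [← hfac, eval_mul, h, mul_zero]
    have hl0 : l ≠ 0 := by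
      intro h
      apply h0
      rw [← hfac, eval_mul, hχ₁]
      simp [h, zero_pow (by omega : k ≠ 0)]
    -- card of roots of χ₂
    have hroots : χ.roots = k • {l} + χ₂.roots := by
      rw [← hfac, roots_mul (hfac.symm ▸ hχ), hχ₁, roots_pow, roots_X_sub_C]
    have hlnot : l ∉ χ₂.roots.toFinset := by
      intro h
      exact hevall ((mem_roots hχ₂0).mp (Multiset.mem_toFinset.mp h))
    have hcard₂ : χ₂.roots.toFinset.card ≤ s := by
      have h1 : χ.roots.toFinset = {l} ∪ χ₂.roots.toFinset := by
        rw [hroots, Multiset.toFinset_add, Multiset.toFinset_nsmul _ k (by omega)]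
        simp
      have h2 : χ.roots.toFinset.card = 1 + χ₂.roots.toFinset.card := by
        rw [h1, Finset.card_union_of_disjoint (by simpa using hlnot)]
        simp
      omega
    -- coprimality and Bezout
    have hcop : IsCoprime χ₁ χ₂ := by
      obtain ⟨g, hg⟩ := X_sub_C_dvd_sub_C_eval (a := l) (p := χ₂)
      have : IsCoprime (X - C l) χ₂ := by
        refine ⟨-(C (χ₂.eval l)⁻¹) * g, C (χ₂.eval l)⁻¹, ?_⟩
        have hCc : C (χ₂.eval l)⁻¹ * C (χ₂.eval l) = 1 := by
          rw [← C_mul, inv_mul_cancel₀ hevall, C_1]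
        linear_combination (C (χ₂.eval l)⁻¹) * hg + hCc
      exact this.pow_left
    obtain ⟨a, b, hab⟩ := hcop
    -- commuting helpers
    have hcomm : ∀ t : Polynomial ℂ, Commute (Polynomial.aeval R t) e := by
      intro t
      induction t using Polynomial.induction_on' with
      | add p q hp hq => rw [map_add]; exact hp.add_left hq
      | monomial n c =>
        rw [Polynomial.aeval_monomial]
        exact Commute.mul_left ((Algebra.commutes c e)) (hRe.pow_left n)
    have hcommR : ∀ t : Polynomial ℂ, Commute R (Polynomial.aeval R t) := by
      intro t
      induction t using Polynomial.induction_on' with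
      | add p q hp hq => rw [map_add]; exact hp.add_right hq
      | monomial n c =>
        rw [Polynomial.aeval_monomial]
        exact Commute.mul_right ((Algebra.commutes c R).symm) ((Commute.refl R).pow_right n)
    -- product collapse: (aeval t₁ * e) * (aeval t₂ * e) = aeval (t₁*t₂) * e
    have hprod : ∀ t₁ t₂ : Polynomial ℂ,
        (Polynomial.aeval R t₁ * e) * (Polynomial.aeval R t₂ * e)
          = Polynomial.aeval R (t₁ * t₂) * e := by
      intro t₁ t₂
      rw [map_mul]
      calc (Polynomial.aeval R t₁ * e) * (Polynomial.aeval R t₂ * e)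
          = Polynomial.aeval R t₁ * (e * Polynomial.aeval R t₂) * e := by
            rw [mul_assoc, mul_assoc, mul_assoc]
        _ = Polynomial.aeval R t₁ * (Polynomial.aeval R t₂ * e) * e := by
            rw [(hcomm t₂).eq]
        _ = Polynomial.aeval R t₁ * Polynomial.aeval R t₂ * (e * e) := by
            rw [mul_assoc, mul_assoc, mul_assoc]
        _ = Polynomial.aeval R t₁ * Polynomial.aeval R t₂ * e := by rw [he]
    have hzero : ∀ t : Polynomial ℂ, Polynomial.aeval R (t * χ) * e = 0 := by
      intro t
      rw [map_mul, mul_assoc, hann, mul_zero]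
    -- idempotents
    set e₁ : A := Polynomial.aeval R (b * χ₂) * e with he₁
    set e₂ : A := Polynomial.aeval R (a * χ₁) * e with he₂
    have he12 : e₁ + e₂ = e := by
      rw [he₁, he₂, ← add_mul, ← map_add]
      have : b * χ₂ + a * χ₁ = 1 := by linear_combination hab
      rw [this, map_one, one_mul]
    have hidem₁ : e₁ * e₁ = e₁ := by
      have hpoly : (b * χ₂) * (b * χ₂) = b * χ₂ + (-(a*b)) * (χ₁ * χ₂) := by
        linear_combination (b * χ₂) * hab
      rw [hfac] at hpoly
      rw [he₁, hprod, hpoly, map_add, add_mul, hzero, add_zero]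
    have hidem₂ : e₂ * e₂ = e₂ := by
      have hpoly : (a * χ₁) * (a * χ₁) = a * χ₁ + (-(a*b)) * (χ₁ * χ₂) := by
        linear_combination (a * χ₁) * hab
      rw [hfac] at hpoly
      rw [he₂, hprod, hpoly, map_add, add_mul, hzero, add_zero]
    have horth : e₁ * e₂ = 0 := by
      have hpoly : (b * χ₂) * (a * χ₁) = (a * b) * (χ₁ * χ₂) := by ring
      rw [hfac] at hpoly
      rw [he₁, he₂, hprod, hpoly, hzero]
    -- commutation of R with e₁, e₂
    have hRe₁ : Commute R e₁ := (hcommR _).mul_right hRe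
    have hRe₂ : Commute R e₂ := (hcommR _).mul_right hRe
    -- annihilators
    have hann₁ : ((R - algebraMap ℂ A l) ^ k) * e₁ = 0 := by
      have hx : (R - algebraMap ℂ A l) ^ k = Polynomial.aeval R χ₁ := by
        rw [hχ₁, map_pow, map_sub, Polynomial.aeval_X, Polynomial.aeval_C]
      have hpoly : χ₁ * (b * χ₂) = b * (χ₁ * χ₂) := by ring
      rw [hfac] at hpoly
      rw [hx, he₁, ← mul_assoc, ← map_mul, hpoly, hzero]
    have hann₂ : (Polynomial.aeval R χ₂) * e₂ = 0 := by
      have hpoly : χ₂ * (a * χ₁) = a * (χ₁ * χ₂) := by ring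
      rw [hfac] at hpoly
      rw [he₂, ← mul_assoc, ← map_mul, hpoly, hzero]
    -- apply the single root block and induction hypothesis
    obtain ⟨p₁, hp₁⟩ := single_root_block R e₁ hidem₁ hRe₁ hl0 hk1 hann₁
    obtain ⟨p₂, hp₂⟩ := IH χ₂ hcard₂ hχ₂0 h20 R e₂ hRe₂ hidem₂ hann₂
    -- combine
    refine ⟨p₁ * (b * χ₂) + p₂ * (a * χ₁), ?_⟩
    have hB : Polynomial.aeval R (p₁ * (b * χ₂) + p₂ * (a * χ₁)) * e
        = (Polynomial.aeval R p₁ * e₁) + (Polynomial.aeval R p₂ * e₂) := by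
      rw [he₁, he₂]
      simp only [map_add, map_mul, add_mul, mul_assoc]
    have hcommB : Commute (Polynomial.aeval R p₁ * e₁) (Polynomial.aeval R p₂ * e₂) := by
      have c1 : Polynomial.aeval R p₁ * e₁ = Polynomial.aeval R (p₁ * (b * χ₂)) * e := by
        rw [map_mul, mul_assoc, he₁]
      have c2 : Polynomial.aeval R p₂ * e₂ = Polynomial.aeval R (p₂ * (a * χ₁)) * e := by
        rw [map_mul, mul_assoc, he₂]
      rw [c1, c2]
      calc Polynomial.aeval R (p₁ * (b * χ₂)) * e * (Polynomial.aeval R (p₂ * (a * χ₁)) * e)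
          = Polynomial.aeval R ((p₁ * (b * χ₂)) * (p₂ * (a * χ₁))) * e := hprod _ _
        _ = Polynomial.aeval R ((p₂ * (a * χ₁)) * (p₁ * (b * χ₂))) * e := by rw [mul_comm]
        _ = Polynomial.aeval R (p₂ * (a * χ₁)) * e * (Polynomial.aeval R (p₁ * (b * χ₂)) * e) :=
            (hprod _ _).symm
    let +nondep : NormedAlgebra ℚ A := .restrictScalars ℚ ℂ A
    rw [hB, exp_add_of_commute hcommB, hp₁, hp₂]
    -- final product computation
    set x : A := 1 - e₁ + R * e₁ with hx
    have hxR : Commute x R := by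
      rw [hx]
      exact (((Commute.one_left R).sub_left hRe₁.symm).add_left
        ((Commute.refl R).mul_left hRe₁.symm))
    have hxe2 : x * e₂ = e₂ := by
      simp only [hx, add_mul, sub_mul, one_mul, mul_assoc, horth, mul_zero, sub_zero, add_zero]
    have hxRe2 : x * (R * e₂) = R * e₂ := by
      rw [← mul_assoc, hxR.eq, mul_assoc, hxe2]
    calc x * (1 - e₂ + R * e₂) = x - x * e₂ + x * (R * e₂) := by
          rw [mul_add, mul_sub, mul_one]
      _ = x - e₂ + R * e₂ := by rw [hxe2, hxRe2]
      _ = 1 - e + R * e := by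
          rw [hx, ← he12, mul_add]
          abel

end BA


open Matrix

/-- The matrix exponential is surjective onto `GL(n,ℂ)`: every invertible complex matrix `R`
is `exp(B)` for some matrix `B`; in particular it is `exp(2πi B)` for some matrix `B`. -/
theorem stmt12 (n : ℕ) (hn : 1 ≤ n)
    (R : Matrix (Fin n) (Fin n) ℂ) (hR : IsUnit R) :
    (∃ B : Matrix (Fin n) (Fin n) ℂ, NormedSpace.exp B = R) ∧
    (∃ B : Matrix (Fin n) (Fin n) ℂ,
      NormedSpace.exp ((2 * (Real.pi : ℂ) * Complex.I) • B) = R) := by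
  have main : ∃ B : Matrix (Fin n) (Fin n) ℂ, NormedSpace.exp B = R := by
    letI : SeminormedRing (Matrix (Fin n) (Fin n) ℂ) := Matrix.linftyOpSemiNormedRing
    letI : NormedRing (Matrix (Fin n) (Fin n) ℂ) := Matrix.linftyOpNormedRing
    letI : NormedAlgebra ℂ (Matrix (Fin n) (Fin n) ℂ) := Matrix.linftyOpNormedAlgebra
    set χ : Polynomial ℂ := R.charpoly with hχdef
    have hχ : χ ≠ 0 := R.charpoly_monic.ne_zero
    have hdet : R.det ≠ 0 := by
      have := (Matrix.isUnit_iff_isUnit_det R).mp hR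
      exact this.ne_zero
    have h0 : χ.eval 0 ≠ 0 := by
      intro h
      apply hdet
      rw [Matrix.det_eq_sign_charpoly_coeff, coeff_zero_eq_eval_zero, ← hχdef, h, mul_zero]
    have hann : (Polynomial.aeval R χ) * 1 = 0 := by
      rw [hχdef, Matrix.aeval_self_charpoly, zero_mul]
    obtain ⟨p, hp⟩ := key_induction (χ.roots.toFinset.card) χ le_rfl hχ h0 R 1
      (Commute.one_right R) (one_mul 1) hann
    refine ⟨Polynomial.aeval R p * 1, ?_⟩
    exact hp.trans (by simp)
  obtain ⟨B, hB⟩ := main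
  have hc : (2 * (Real.pi : ℂ) * Complex.I) ≠ 0 := by
    simp [Real.pi_ne_zero, Complex.I_ne_zero, Complex.ofReal_ne_zero]
  refine ⟨⟨B, hB⟩, ⟨(2 * (Real.pi : ℂ) * Complex.I)⁻¹ • B, ?_⟩⟩
  rw [smul_smul, mul_inv_cancel₀ hc, one_smul, hB]
end

section
/- Let n ≥ 1, let R be an invertible n×n complex matrix, and let h > 0 be a real number. Then there exists a map Ψ : ℂ → M(n,ℂ) such that each entry of Ψ is an entire function (complex-differentiable on all of ℂ), Ψ(z) is invertible for every z ∈ ℂ, and Ψ(z + h) = Ψ(z)·R for every z ∈ ℂ. -/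
open Matrix Polynomial NormedSpace Module Finset Nat

attribute [local instance] Matrix.linftyOpNormedAddCommGroup Matrix.linftyOpNormedRing
  Matrix.linftyOpNormedAlgebra

namespace Stmt13Aux

abbrev Mat (n : ℕ) := Matrix (Fin n) (Fin n) ℂ

variable {n : ℕ}

/-- The linear map `A ↦ A.mulVec v`. -/
noncomputable def mulVecR (v : Fin n → ℂ) : Mat n →ₗ[ℂ] (Fin n → ℂ) where
  toFun A := A.mulVec v
  map_add' A B := Matrix.add_mulVec A B v
  map_smul' c A := Matrix.smul_mulVec c A v

lemma pow_mulVec {A : Mat n} {v : Fin n → ℂ} {μ : ℂ} (h : A.mulVec v = μ • v) (k : ℕ) :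
    (A ^ k).mulVec v = μ ^ k • v := by
  induction k with
  | zero => simp
  | succ k ih =>
      rw [pow_succ, pow_succ, ← Matrix.mulVec_mulVec, h, Matrix.mulVec_smul, ih, smul_smul, mul_comm]

lemma aeval_mulVec {A : Mat n} {v : Fin n → ℂ} {μ : ℂ} (h : A.mulVec v = μ • v) (q : ℂ[X]) :
    (aeval A q).mulVec v = q.eval μ • v := by
  induction q using Polynomial.induction_on' with
  | add p q hp hq => rw [map_add, Matrix.add_mulVec, hp, hq, eval_add, add_smul]
  | monomial k c =>
      rw [aeval_monomial, eval_monomial, ← Algebra.smul_def, Matrix.smul_mulVec,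
        pow_mulVec h, smul_smul]

lemma exp_mulVec {A : Mat n} {v : Fin n → ℂ} {c : ℂ} (h : A.mulVec v = c • v) :
    (exp A).mulVec v = Complex.exp c • v := by
  have hsum : Summable fun k : ℕ => (k ! : ℂ)⁻¹ • A ^ k := expSeries_summable' A
  have h1 : (exp A).mulVec v = ∑' k : ℕ, ((k ! : ℂ)⁻¹ • A ^ k).mulVec v := by
    rw [exp_eq_tsum ℂ]
    exact ((mulVecR v).toContinuousLinearMap.map_tsum hsum)
  have h2 : ∀ k : ℕ, ((k ! : ℂ)⁻¹ • A ^ k).mulVec v = ((k ! : ℂ)⁻¹ * c ^ k) • v := by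
    intro k; rw [Matrix.smul_mulVec, pow_mulVec h, smul_smul]
  have hsum2 : Summable fun k : ℕ => (k ! : ℂ)⁻¹ * c ^ k := by
    simpa [smul_eq_mul] using expSeries_summable' (𝕂 := ℂ) (𝔸 := ℂ) c
  rw [h1, tsum_congr h2, hsum2.tsum_smul_const]
  congr 1
  rw [Complex.exp_eq_exp_ℂ, exp_eq_tsum ℂ]
  simp [smul_eq_mul]


lemma hasDerivAt_polyExp (f : ℂ → Mat d) (g : Mat d) (K : ℕ) (t : ℂ)
    (hf : HasDerivAt f g t) (hc : Commute (f t) g) (hnil : f t ^ K = 0) :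
    HasDerivAt (fun s => ∑ j ∈ Finset.range (K + 1), ((j.factorial : ℂ))⁻¹ • f s ^ j)
      ((∑ j ∈ Finset.range (K + 1), ((j.factorial : ℂ))⁻¹ • f t ^ j) * g) t := by
  have hpow : ∀ j : ℕ, HasDerivAt (fun s => f s ^ (j + 1)) (((j : ℂ) + 1) • (f t ^ j * g)) t := by
    intro j
    induction j with
    | zero => simpa using hf
    | succ j ih =>
        have h := ih.mul hf
        simp only [Pi.mul_def, ← pow_succ] at h
        refine h.congr_deriv (Eq.symm ?_)
        have e1 : f t ^ j * g * f t = f t ^ (j + 1) * g := by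
          rw [mul_assoc, hc.symm.eq, ← mul_assoc, ← pow_succ]
        rw [smul_mul_assoc, e1]
        have e2 : ((j : ℂ) + 1 + 1) = ((j : ℂ) + 1) + 1 := by ring
        push_cast
        rw [e2, add_smul, one_smul]
  have hfun : (fun s => ∑ j ∈ Finset.range (K + 1), ((j.factorial : ℂ))⁻¹ • f s ^ j)
      = fun s => (∑ j ∈ Finset.range K, (((j + 1).factorial : ℂ))⁻¹ • f s ^ (j + 1))
          + ((Nat.factorial 0 : ℂ))⁻¹ • f s ^ 0 := by
    funext s
    exact Finset.sum_range_succ' _ _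
  rw [hfun]
  have hterm : ∀ j ∈ Finset.range K, HasDerivAt
      (fun s => (((j + 1).factorial : ℂ))⁻¹ • f s ^ (j + 1))
      (((j.factorial : ℂ))⁻¹ • (f t ^ j * g)) t := by
    intro j _
    have h := (hpow j).const_smul ((((j + 1).factorial : ℂ))⁻¹)
    refine h.congr_deriv (Eq.symm ?_)
    rw [smul_smul]
    congr 1
    rw [Nat.factorial_succ]
    push_cast
    have hj1 : ((j : ℂ) + 1) ≠ 0 := Nat.cast_add_one_ne_zero j
    rw [_root_.mul_inv_rev, mul_assoc, inv_mul_cancel₀ hj1, mul_one]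
  have hsum := HasDerivAt.fun_sum hterm
  have hconst : HasDerivAt (fun s => ((Nat.factorial 0 : ℂ))⁻¹ • f s ^ 0) 0 t := by
    simp only [pow_zero]
    exact hasDerivAt_const _ _
  have h := hsum.add hconst
  refine h.congr_deriv (Eq.symm ?_)
  rw [Finset.sum_range_succ, hnil, smul_zero, add_zero, add_zero, Finset.sum_mul]
  exact Finset.sum_congr rfl fun j _ => smul_mul_assoc _ _ _

lemma exp_one_add_of_nilpotent (M : Mat d) (K : ℕ) (hK : M ^ K = 0) :
    exp (∑ i ∈ Finset.range K, ((-1 : ℂ) ^ i / (i + 1)) • M ^ (i + 1)) = 1 + M := by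
  rcases Nat.eq_zero_or_pos K with rfl | hK1
  · haveI : Subsingleton (Mat d) := subsingleton_of_zero_eq_one (by simpa using hK.symm)
    exact Subsingleton.elim _ _
  -- the log curve and its derivative
  set L : ℂ → Mat d := fun t => ∑ i ∈ Finset.range K,
    ((-1 : ℂ) ^ i / (i + 1) * t ^ (i + 1)) • M ^ (i + 1) with hL
  set L' : ℂ → Mat d := fun t => ∑ i ∈ Finset.range K,
    ((-1 : ℂ) ^ i * t ^ i) • M ^ (i + 1) with hL'
  have hcsum : ∀ (s : Finset ℕ) (c : ℕ → ℂ) (e : ℕ → ℕ) (k : ℕ),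
      Commute (∑ i ∈ s, c i • M ^ e i) (M ^ k) := by
    intro s c e k
    refine Commute.sum_left _ _ _ fun i _ => ?_
    exact (Commute.pow_pow_self M (e i) k).smul_left _
  have hcomm : ∀ (s u : Finset ℕ) (c c' : ℕ → ℂ) (e e' : ℕ → ℕ),
      Commute (∑ i ∈ s, c i • M ^ e i) (∑ i ∈ u, c' i • M ^ e' i) := by
    intro s u c c' e e'
    refine Commute.sum_right _ _ _ fun j _ => ?_
    exact (hcsum s c e (e' j)).smul_right _
  -- derivative of L
  have hLderiv : ∀ t : ℂ, HasDerivAt L (L' t) t := by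
    intro t
    refine HasDerivAt.fun_sum fun i _ => ?_
    have hs : HasDerivAt (fun t : ℂ => (-1 : ℂ) ^ i / (i + 1) * t ^ (i + 1))
        ((-1 : ℂ) ^ i * t ^ i) t := by
      have h := (hasDerivAt_pow (i + 1) t).const_mul ((-1 : ℂ) ^ i / (i + 1))
      refine h.congr_deriv (Eq.symm ?_)
      have hi : ((i : ℂ) + 1) ≠ 0 := Nat.cast_add_one_ne_zero i
      push_cast
      field_simp
    exact hs.smul_const (M ^ (i + 1))
  -- nilpotency of L t
  have hLnil : ∀ t : ℂ, (L t) ^ K = 0 := by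
    intro t
    have hfac : L t = (∑ i ∈ Finset.range K, ((-1 : ℂ) ^ i / (i + 1) * t ^ (i + 1)) • M ^ i) * M := by
      rw [Finset.sum_mul]
      exact Finset.sum_congr rfl fun i _ => by rw [smul_mul_assoc, ← pow_succ]
    have hcM : Commute (∑ i ∈ Finset.range K, ((-1 : ℂ) ^ i / (i + 1) * t ^ (i + 1)) • M ^ i) M := by
      simpa using hcsum (Finset.range K) _ _ 1
    rw [hfac, hcM.mul_pow, hK, mul_zero]
  -- the geometric inverse
  have hgeom : ∀ t : ℂ, (∑ i ∈ Finset.range K, (-(t • M)) ^ i) * (1 + t • M) = 1 := by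
    intro t
    have h := geom_sum_mul (-(t • M)) K
    have hx : (-(t • M)) ^ K = 0 := by
      rw [neg_pow, _root_.smul_pow, hK, smul_zero, mul_zero]
    have h2 : (∑ i ∈ Finset.range K, (-(t • M)) ^ i) * (1 + t • M)
        = -((∑ i ∈ Finset.range K, (-(t • M)) ^ i) * (-(t • M) - 1)) := by
      rw [← mul_neg]
      congr 1
      rw [neg_sub]
      abel
    rw [h2, h, hx, zero_sub, neg_neg]
  -- telescoping: L' t * (1 + t • M) = M
  have htel : ∀ t : ℂ, L' t * (1 + t • M) = M := by
    intro t
    have hfac : L' t = M * (∑ i ∈ Finset.range K, (-(t • M)) ^ i) := by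
      simp only [hL', Finset.mul_sum]
      refine Finset.sum_congr rfl fun i _ => ?_
      rw [← neg_smul, _root_.smul_pow, mul_smul_comm]
      have hmm : M * M ^ i = M ^ (i + 1) := by
        rw [pow_succ, ((Commute.refl M).pow_right i).eq]
      rw [hmm]
      congr 1
      ring
    rw [hfac, mul_assoc, hgeom, mul_one]
  -- commutation between values of L and L'
  have hLLcomm : ∀ t s : ℂ, Commute (L t) (L' s) := by
    intro t s
    simp only [hL, hL']
    exact hcomm _ _ _ _ _ _
  -- the truncated exponential of -L
  set u : ℂ → Mat d := fun t => -(L t) with hu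
  have huderiv : ∀ t : ℂ, HasDerivAt u (-(L' t)) t := fun t => (hLderiv t).neg
  have hunil : ∀ t : ℂ, (u t) ^ K = 0 := by
    intro t
    have : u t = -(L t) := rfl
    rw [this, neg_pow, hLnil t, mul_zero]
  set E : ℂ → Mat d := fun t => ∑ j ∈ Finset.range (K + 1),
    ((j.factorial : ℂ))⁻¹ • (u t) ^ j with hE
  have hEderiv : ∀ t : ℂ, HasDerivAt E (E t * (-(L' t))) t := fun t =>
    hasDerivAt_polyExp u (-(L' t)) K t (huderiv t)
      ((hLLcomm t t).neg_left.neg_right) (hunil t)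
  have hH : ∀ t : ℂ, HasDerivAt (fun t => E t * (1 + t • M)) 0 t := by
    intro t
    have hlin : HasDerivAt (fun t : ℂ => 1 + t • M) M t := by
      exact (((hasDerivAt_id t).smul_const M).const_add (1 : Mat d)).congr_deriv (one_smul _ _)
    have h := (hEderiv t).mul hlin
    refine h.congr_deriv (Eq.symm ?_)
    rw [mul_assoc, neg_mul, htel t, mul_neg, neg_add_cancel]
  have hHdiff : Differentiable ℂ (fun t : ℂ => E t * (1 + t • M)) :=
    fun t => (hH t).differentiableAt
  have hHconst : E 1 * (1 + (1 : ℂ) • M) = E 0 * (1 + (0 : ℂ) • M) :=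
    is_const_of_deriv_eq_zero hHdiff (fun t => (hH t).deriv) 1 0
  have hu0 : u 0 = 0 := by
    simp [hu, hL, zero_pow]
  have hE0 : E 0 = 1 := by
    rw [hE]
    simp only [hu0]
    rw [Finset.sum_range_succ']
    simp [zero_pow]
  have hMform : E 1 * (1 + M) = 1 := by
    have := hHconst
    rw [hE0] at this
    simpa using this
  have hEexp : E 1 = exp (u 1) := by
    rw [exp_eq_tsum ℂ, hE]
    simp only
    refine (tsum_eq_sum ?_).symm
    intro j hj
    have hKj : K ≤ j := by
      by_contra hlt
      exact hj (Finset.mem_range.mpr (by omega))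
    rw [pow_eq_zero_of_le hKj (hunil 1), smul_zero]
  have h1 : exp (u 1) * (1 + M) = 1 := by rw [← hEexp]; exact hMform
  have hgoal : (∑ i ∈ Finset.range K, ((-1 : ℂ) ^ i / (i + 1)) • M ^ (i + 1)) = L 1 := by
    simp [hL]
  rw [hgoal]
  have h2 : exp (L 1) * exp (u 1) = 1 := by
    have hc : Commute (L 1) (u 1) := (Commute.refl (L 1)).neg_right
    erw [← NormedSpace.exp_add_of_commute hc]
    have : L 1 + u 1 = 0 := by simp [hu]
    rw [this, NormedSpace.exp_zero]
  calc exp (L 1) = exp (L 1) * (exp (u 1) * (1 + M)) := by rw [h1, mul_one]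
    _ = (exp (L 1) * exp (u 1)) * (1 + M) := by rw [mul_assoc]
    _ = 1 + M := by rw [h2, one_mul]


theorem exp_semisimple (S : Mat n) (hS : IsUnit S)
    (hss : Module.End.IsSemisimple (Matrix.toLinAlgEquiv' S)) :
    ∃ p : ℂ[X], exp (aeval S p) = S := by
  classical
  set f : Module.End ℂ (Fin n → ℂ) := Matrix.toLinAlgEquiv' S with hf
  have hfv : ∀ v, f v = S.mulVec v := fun v => Matrix.toLinAlgEquiv'_apply S v
  have hmp : (minpoly ℂ f) ≠ 0 := minpoly.ne_zero_of_finite ℂ f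
  set T : Finset ℂ := (minpoly ℂ f).roots.toFinset with hT
  set p : ℂ[X] := Lagrange.interpolate T id Complex.log with hp
  refine ⟨p, ?_⟩
  have hfunit : IsUnit f := hS.map (Matrix.toLinAlgEquiv' (n := Fin n) (R := ℂ))
  have hfinj : Function.Injective f := by
    obtain ⟨uf, huf⟩ := hfunit
    intro x y hxy
    have h1 : ((↑uf⁻¹ * ↑uf : Module.End ℂ (Fin n → ℂ))) x
        = ((↑uf⁻¹ * ↑uf : Module.End ℂ (Fin n → ℂ))) y := by
      simp only [Module.End.mul_apply, huf, hxy]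
    simpa [uf.inv_mul] using h1
  have key : ∀ μ : ℂ, (f.eigenspace μ) ≤
      LinearMap.eqLocus (Matrix.toLinAlgEquiv' (exp (aeval S p))) f := by
    intro μ v hv
    have hv' : S.mulVec v = μ • v := by
      rw [← hfv]; exact Module.End.mem_eigenspace_iff.mp hv
    rw [LinearMap.mem_eqLocus]
    rcases eq_or_ne v 0 with rfl | hv0
    · simp
    · have heig : f.HasEigenvalue μ :=
        Module.End.hasEigenvalue_of_hasEigenvector ⟨hv, hv0⟩
      have hroot : μ ∈ T := by
        rw [hT, Multiset.mem_toFinset, Polynomial.mem_roots hmp]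
        exact Module.End.hasEigenvalue_iff_isRoot.mp heig
      have hμ0 : μ ≠ 0 := by
        rintro rfl
        apply hv0
        apply hfinj
        rw [hfv, hv', map_zero, zero_smul]
      have hpμ : p.eval μ = Complex.log μ := by
        rw [hp]
        exact Lagrange.eval_interpolate_at_node _ (Set.injOn_id _) hroot
      have h1 : (aeval S p).mulVec v = Complex.log μ • v := by
        rw [aeval_mulVec hv' p, hpμ]
      have h2 : (exp (aeval S p)).mulVec v = μ • v := by
        rw [exp_mulVec h1, Complex.exp_log hμ0]
      rw [Matrix.toLinAlgEquiv'_apply, hfv, h2, hv']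
  have htop : ∀ v, Matrix.toLinAlgEquiv' (exp (aeval S p)) v = f v := by
    intro v
    have hmem : v ∈ LinearMap.eqLocus (Matrix.toLinAlgEquiv' (exp (aeval S p))) f := by
      have h1 : (⊤ : Submodule ℂ (Fin n → ℂ)) ≤
          LinearMap.eqLocus (Matrix.toLinAlgEquiv' (exp (aeval S p))) f := by
        rw [← Module.End.iSup_maxGenEigenspace_eq_top f]
        refine iSup_le fun μ => ?_
        rw [hss.isFinitelySemisimple.maxGenEigenspace_eq_eigenspace μ]
        exact key μ
      exact h1 Submodule.mem_top
    exact hmem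
  exact Matrix.toLinAlgEquiv'.injective (LinearMap.ext htop)


theorem exists_exp_eq (R : Mat n) (hR : IsUnit R) : ∃ B : Mat n, exp B = R := by
  classical
  obtain ⟨N', hN'mem, S', hS'mem, hN'nil, hS'ss, hsum⟩ :=
    Module.End.exists_isNilpotent_isSemisimple (f := Matrix.toLinAlgEquiv' R)
  rw [Algebra.adjoin_singleton_eq_range_aeval, AlgHom.mem_range] at hN'mem hS'mem
  obtain ⟨pn, hpn⟩ := hN'mem
  obtain ⟨ps, hps⟩ := hS'mem
  set N : Mat n := aeval R pn with hN
  set S : Mat n := aeval R ps with hS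
  have hφN : Matrix.toLinAlgEquiv' N = N' := by
    rw [← hpn, hN]
    exact (Polynomial.aeval_algHom_apply Matrix.toLinAlgEquiv'.toAlgHom R pn).symm
  have hφS : Matrix.toLinAlgEquiv' S = S' := by
    rw [← hps, hS]
    exact (Polynomial.aeval_algHom_apply Matrix.toLinAlgEquiv'.toAlgHom R ps).symm
  have hRNS : R = N + S := by
    apply Matrix.toLinAlgEquiv'.injective
    rw [map_add, hφN, hφS, hsum]
  have hNnil : IsNilpotent N := by
    have h := hN'nil.map (Matrix.toLinAlgEquiv' (n := Fin n) (R := ℂ)).symm.toAlgHom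
    rw [← hφN] at h
    simpa using h
  have hcomm : ∀ p q : ℂ[X], Commute (aeval R p) (aeval R q) := by
    intro p q
    unfold Commute SemiconjBy
    rw [← _root_.map_mul, ← _root_.map_mul, mul_comm]
  have hcNR : Commute R N := by simpa [hN] using hcomm X pn
  have hcSN : Commute S N := hcomm ps pn
  -- S is a unit
  obtain ⟨u, hu⟩ := hR
  have hcuN : Commute (↑u⁻¹ : Mat n) N := by
    have h : Commute (↑u : Mat n) N := by rw [hu]; exact hcNR
    exact h.units_inv_left
  have hnilUN : IsNilpotent ((↑u⁻¹ : Mat n) * N) := hcuN.isNilpotent_mul_left hNnil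
  have hSunit : IsUnit S := by
    have hSform : S = ↑u * (1 - ↑u⁻¹ * N) := by
      rw [mul_sub, mul_one, ← mul_assoc, Units.mul_inv, one_mul, hu]
      rw [eq_sub_iff_add_eq, add_comm, ← hRNS]
    rw [hSform]
    exact u.isUnit.mul hnilUN.isUnit_one_sub
  -- semisimple part
  have hS'ss2 : Module.End.IsSemisimple (Matrix.toLinAlgEquiv' S) := by rw [hφS]; exact hS'ss
  obtain ⟨p, hp⟩ := exp_semisimple S hSunit hS'ss2
  set B1 : Mat n := aeval S p with hB1
  have hB1R : B1 = aeval R (p.comp ps) := by rw [hB1, aeval_comp, ← hS]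
  -- nilpotent part
  obtain ⟨us, hus⟩ := hSunit
  have hcusN : Commute (↑us⁻¹ : Mat n) N := by
    have h : Commute (↑us : Mat n) N := by rw [hus]; exact hcSN
    exact h.units_inv_left
  set M : Mat n := (↑us⁻¹ : Mat n) * N with hM
  have hMnil : IsNilpotent M := hcusN.isNilpotent_mul_left hNnil
  obtain ⟨K, hK⟩ := hMnil
  set B2 : Mat n := ∑ i ∈ Finset.range K, ((-1 : ℂ) ^ i / (i + 1)) • M ^ (i + 1) with hB2
  have hB2exp : exp B2 = 1 + M := exp_one_add_of_nilpotent M K hK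
  -- commutation of B1 with M, hence with B2
  have hcB1S : Commute B1 S := by rw [hB1R, hS]; exact hcomm _ _
  have hcB1N : Commute B1 N := by rw [hB1R, hN]; exact hcomm _ _
  have hcB1us : Commute B1 (↑us⁻¹ : Mat n) := by
    have h : Commute B1 (↑us : Mat n) := by rw [hus]; exact hcB1S
    exact h.units_inv_right
  have hcB1M : Commute B1 M := hcB1us.mul_right hcB1N
  have hcB1B2 : Commute B1 B2 := by
    rw [hB2]
    exact Commute.sum_right _ _ _ fun i _ => ((hcB1M.pow_right (i + 1)).smul_right _)
  refine ⟨B1 + B2, ?_⟩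
  erw [NormedSpace.exp_add_of_commute hcB1B2, hp, hB2exp, mul_add, mul_one]
  have hSM : S * M = N := by rw [hM, ← hus, Units.mul_inv_cancel_left]
  rw [hSM, hRNS, add_comm]


/-- Entry projection as a linear map. -/
def entryLM (i j : Fin n) : Mat n →ₗ[ℂ] ℂ where
  toFun A := A i j
  map_add' _ _ := rfl
  map_smul' _ _ := rfl

end Stmt13Aux

open Stmt13Aux

/-- For any invertible `R ∈ GL(n,ℂ)` and `h > 0` there is a holomorphic map
`Ψ : ℂ → GL(n,ℂ)` (entrywise entire, with invertible values) such that the translation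
`z ↦ z + h` acts with constant factor of automorphy `R`: `Ψ(z+h) = Ψ(z)·R`. -/
theorem stmt13 (n : ℕ) (hn : 1 ≤ n)
    (R : Matrix (Fin n) (Fin n) ℂ) (hR : IsUnit R) (h : ℝ) (hh : 0 < h) :
    ∃ Ψ : ℂ → Matrix (Fin n) (Fin n) ℂ,
      (∀ i j : Fin n, Differentiable ℂ (fun z => Ψ z i j)) ∧
      (∀ z : ℂ, IsUnit (Ψ z)) ∧
      (∀ z : ℂ, Ψ (z + (h : ℂ)) = Ψ z * R) := by
  obtain ⟨B, hB⟩ := exists_exp_eq R hR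
  have hh0 : (h : ℂ) ≠ 0 := by
    exact_mod_cast Complex.ofReal_ne_zero.mpr hh.ne'
  set C : Mat n := ((h : ℂ))⁻¹ • B with hC
  refine ⟨fun z => exp (z • C), ?_, ?_, ?_⟩
  · intro i j
    have hdiff : Differentiable ℂ (fun z : ℂ => exp (z • C)) := fun z =>
      (hasDerivAt_exp_smul_const (𝕂 := ℂ) C z).differentiableAt
    exact ((entryLM i j).toContinuousLinearMap.differentiable).comp hdiff
  · intro z
    refine ⟨⟨exp (z • C), exp (-(z • C)), ?_, ?_⟩, rfl⟩
    · erw [← NormedSpace.exp_add_of_commute (Commute.refl (z • C)).neg_right,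
        add_neg_cancel, NormedSpace.exp_zero]
    · erw [← NormedSpace.exp_add_of_commute (Commute.refl (z • C)).neg_right.symm,
        neg_add_cancel, NormedSpace.exp_zero]
  · intro z
    have h1 : (z + (h : ℂ)) • C = z • C + B := by
      rw [add_smul, hC, smul_smul, smul_smul, mul_inv_cancel₀ hh0, one_smul]
    have h2 : Commute (z • C) B := by
      rw [hC, smul_smul]
      exact (Commute.refl B).smul_left _
    show exp ((z + (h : ℂ)) • C) = exp (z • C) * R
    erw [h1, NormedSpace.exp_add_of_commute h2, hB]
    rfl
end
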